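/- Let a, b be squarefree coprime integers and p a prime. The equation ax² + by² + cz² = 0 with p dividing c (and a,b,c squarefree pairwise coprime) has a nonzero solution over ℚ_p whenever -ab is a quadratic residue mod p, for odd primes p. -/

import Mathlib

open Polynomial

lemma exists_sqrt_padic (p : ℕ) [Fact p.Prime] (hodd : p ≠ 2) (m d : ℤ)
    (hm : ¬ (p : ℤ) ∣ m) (h : (p : ℤ) ∣ d ^ 2 - m) :
    ∃ t : ℚ_[p], t ^ 2 = (m : ℚ_[p]) := by
  have hp := (Fact.out : p.Prime)
  have hpd : ¬ (p : ℤ) ∣ d := by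
    intro hd
    apply hm
    have := dvd_sub (dvd_pow hd two_ne_zero) h
    simpa using this
  have hp2 : ¬ (p : ℤ) ∣ 2 := by
    intro h2
    rw [show (2 : ℤ) = ((2 : ℕ) : ℤ) by norm_num, Int.natCast_dvd_natCast] at h2
    exact hodd ((Nat.prime_dvd_prime_iff_eq hp Nat.prime_two).mp h2)
  have hpd2 : ¬ (p : ℤ) ∣ 2 * d := fun hdvd =>
    (((Nat.prime_iff_prime_int.mp hp).dvd_mul.mp hdvd).elim hp2 hpd)
  set F : Polynomial ℤ_[p] := X ^ 2 - C (m : ℤ_[p]) with hF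
  have hFeval : F.eval (d : ℤ_[p]) = ((d ^ 2 - m : ℤ) : ℤ_[p]) := by
    simp [hF]
  have hFderiv : F.derivative.eval (d : ℤ_[p]) = ((2 * d : ℤ) : ℤ_[p]) := by
    simp [hF]
    exact Or.inl one_add_one_eq_two
  have hnorm1 : ‖F.eval (d : ℤ_[p])‖ < 1 := by
    rw [hFeval]; exact (PadicInt.norm_int_lt_one_iff_dvd _).mpr h
  have hnorm2 : ‖F.derivative.eval (d : ℤ_[p])‖ = 1 := by
    rw [hFderiv]
    refine le_antisymm (PadicInt.norm_le_one _) (not_lt.mp ?_)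
    rw [PadicInt.norm_int_lt_one_iff_dvd]
    exact hpd2
  have hnorm : ‖F.eval (d : ℤ_[p])‖ < ‖F.derivative.eval (d : ℤ_[p])‖ ^ 2 := by
    rw [hnorm2]; simpa using hnorm1
  obtain ⟨z, hz, -⟩ := hensels_lemma hnorm
  refine ⟨(z : ℚ_[p]), ?_⟩
  have : z ^ 2 - (m : ℤ_[p]) = 0 := by simpa [hF] using hz
  have hz2 : z ^ 2 = (m : ℤ_[p]) := by linear_combination this
  have := congrArg (fun x : ℤ_[p] => (x : ℚ_[p])) hz2
  push_cast at this
  exact_mod_cast this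

theorem stmt_5 (a b c : ℤ) (p : ℕ) [Fact p.Prime] (hodd : p ≠ 2)
    (ha : a ≠ 0) (hb : b ≠ 0) (hc : c ≠ 0)
    (hsa : Squarefree a) (hsb : Squarefree b) (hsc : Squarefree c)
    (hab : IsCoprime a b) (hbc : IsCoprime b c) (hca : IsCoprime c a)
    (hpc : (p : ℤ) ∣ c)
    (hqr : ∃ d : ℤ, d ^ 2 ≡ -(a * b) [ZMOD (p : ℤ)]) :
    ∃ x y z : ℚ_[p], (x, y, z) ≠ (0, 0, 0) ∧
      (a : ℚ_[p]) * x ^ 2 + (b : ℚ_[p]) * y ^ 2 + (c : ℚ_[p]) * z ^ 2 = 0 := by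
  have hp := (Fact.out : p.Prime)
  have hpp : Prime (p : ℤ) := Nat.prime_iff_prime_int.mp hp
  have hpa : ¬ (p : ℤ) ∣ a := by
    intro hdvd
    obtain ⟨u, v, huv⟩ := hca
    exact hpp.not_unit (isUnit_of_dvd_one (huv ▸ dvd_add (Dvd.dvd.mul_left hpc u)
      (Dvd.dvd.mul_left hdvd v)))
  have hpb : ¬ (p : ℤ) ∣ b := by
    intro hdvd
    obtain ⟨u, v, huv⟩ := hbc
    exact hpp.not_unit (isUnit_of_dvd_one (huv ▸ dvd_add (Dvd.dvd.mul_left hdvd u)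
      (Dvd.dvd.mul_left hpc v)))
  have hpab : ¬ (p : ℤ) ∣ -(a * b) := by
    rw [dvd_neg]
    intro hdvd
    exact ((hpp.dvd_mul.mp hdvd).elim hpa hpb)
  obtain ⟨d, hd⟩ := hqr
  have hdvd : (p : ℤ) ∣ d ^ 2 - -(a * b) := Int.ModEq.dvd hd.symm
  obtain ⟨t, ht⟩ := exists_sqrt_padic p hodd (-(a * b)) d hpab hdvd
  refine ⟨t, (a : ℚ_[p]), 0, ?_, ?_⟩
  · intro hcontra
    have : (a : ℚ_[p]) = 0 := (Prod.mk.injEq _ _ _ _ ▸ congrArg Prod.snd hcontra).1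
    exact ha (by exact_mod_cast this)
  · push_cast at ht
    rw [ht]; ring
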